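/- (Corollary 3.6, reconstruction from mismatches.) Let X be a weighted string of length n over a finite alphabet Σ with heavy string H_X, and let 1/z ∈ (0,1] be a weight threshold. Every z-solid factor U of X occurring at positions i..j is uniquely determined by the triple (i, j, M), where M = {(h, U[h−i+1]) : i ≤ h ≤ j and U[h−i+1] ≠ H_X[h]} is its set of mismatches against H_X[i..j]; that is, if U and U′ are both z-solid factors at positions i..j with the same mismatch set M, then U = U′, and moreover |M| ≤ log₂ z. -/
import Mathlib


/-- Corollary 3.6, reconstruction from mismatches: a `z`-solid factor
`U` occurring at positions `i..i+m-1` (0-indexed) of a weighted string `X` with heavy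
string `H` is uniquely determined by its set of mismatches
`M = {(h, U h) : U h ≠ H (i+h)}` against the corresponding fragment of `H`:
if `U` and `U'` are both `z`-solid at the same positions with the same mismatch set,
then `U = U'`; moreover `|M| ≤ log₂ z`. -/
theorem solid_factor_determined_by_mismatches {A : Type*} [Fintype A] [DecidableEq A]
    (n : ℕ) (X : ℕ → A → ℝ)
    (hX0 : ∀ i < n, ∀ a, 0 ≤ X i a)
    (hX1 : ∀ i < n, ∑ a, X i a = 1)
    (H : ℕ → A) (hH : ∀ i < n, ∀ a, X i a ≤ X i (H i))
    (z : ℝ) (hz : 1 ≤ z)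
    (i m : ℕ) (him : i + m ≤ n) (U U' : Fin m → A)
    (hU : 1 / z ≤ ∏ h : Fin m, X (i + h.val) (U h))
    (hU' : 1 / z ≤ ∏ h : Fin m, X (i + h.val) (U' h))
    (hM : (Finset.univ.filter (fun h : Fin m => U h ≠ H (i + h.val))).image
            (fun h => (h, U h)) =
          (Finset.univ.filter (fun h : Fin m => U' h ≠ H (i + h.val))).image
            (fun h => (h, U' h))) :
    U = U' ∧
      (((Finset.univ.filter (fun h : Fin m => U h ≠ H (i + h.val))).image
          (fun h => (h, U h))).card : ℝ) ≤ Real.logb 2 z := by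
  have hlt : ∀ h : Fin m, i + h.val < n := fun h => lt_of_lt_of_le (by omega) him
  -- Part 1: U = U'
  have hEq : U = U' := by
    funext h
    by_cases hc : U h = H (i + h.val)
    · by_contra hne
      by_cases hc' : U' h = H (i + h.val)
      · exact hne (hc.trans hc'.symm)
      · -- (h, U' h) ∈ RHS = LHS
        have hmem : (h, U' h) ∈ (Finset.univ.filter
            (fun h : Fin m => U h ≠ H (i + h.val))).image (fun h => (h, U h)) := by
          rw [hM]
          exact Finset.mem_image.2 ⟨h, Finset.mem_filter.2 ⟨Finset.mem_univ _, hc'⟩, rfl⟩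
        obtain ⟨h', hh', heq⟩ := Finset.mem_image.1 hmem
        have : h' = h := (Prod.mk.injEq _ _ _ _ ▸ heq).1
        subst this
        exact (Finset.mem_filter.1 hh').2 hc
    · have hmem : (h, U h) ∈ (Finset.univ.filter
          (fun h : Fin m => U' h ≠ H (i + h.val))).image (fun h => (h, U' h)) := by
        rw [← hM]
        exact Finset.mem_image.2 ⟨h, Finset.mem_filter.2 ⟨Finset.mem_univ _, hc⟩, rfl⟩
      obtain ⟨h', hh', heq⟩ := Finset.mem_image.1 hmem
      have h1 : h' = h := (Prod.mk.injEq _ _ _ _ ▸ heq).1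
      have h2 : U' h' = U h := (Prod.mk.injEq _ _ _ _ ▸ heq).2
      subst h1
      exact h2.symm
  refine ⟨hEq, ?_⟩
  -- Part 2: cardinality bound
  set S := Finset.univ.filter (fun h : Fin m => U h ≠ H (i + h.val)) with hS
  set k := S.card with hk
  have hcard : (S.image (fun h => (h, U h))).card ≤ k := Finset.card_image_le
  -- each mismatch factor ≤ 1/2
  have hhalf : ∀ h ∈ S, X (i + h.val) (U h) ≤ 1 / 2 := by
    intro h hh
    have hne := (Finset.mem_filter.1 hh).2
    have hsub : ({U h, H (i + h.val)} : Finset A) ⊆ Finset.univ := Finset.subset_univ _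
    have hsum : X (i + h.val) (U h) + X (i + h.val) (H (i + h.val)) ≤ 1 := by
      have := Finset.sum_le_sum_of_subset_of_nonneg hsub
        (fun a _ _ => hX0 _ (hlt h) a)
      rw [Finset.sum_pair hne, hX1 _ (hlt h)] at this
      exact this
    have hle := hH _ (hlt h) (U h)
    linarith
  have hnonneg : ∀ h : Fin m, 0 ≤ X (i + h.val) (U h) := fun h => hX0 _ (hlt h) _
  have hle1 : ∀ h : Fin m, X (i + h.val) (U h) ≤ 1 := by
    intro h
    have hsub : ({U h} : Finset A) ⊆ Finset.univ := Finset.subset_univ _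
    have := Finset.sum_le_sum_of_subset_of_nonneg hsub (fun a _ _ => hX0 _ (hlt h) a)
    rw [Finset.sum_singleton, hX1 _ (hlt h)] at this
    exact this
  have hsplit : ∏ h : Fin m, X (i + h.val) (U h)
      = (∏ h ∈ S, X (i + h.val) (U h)) * ∏ h ∈ Sᶜ, X (i + h.val) (U h) :=
    (Finset.prod_mul_prod_compl S _).symm
  have hprodS : ∏ h ∈ S, X (i + h.val) (U h) ≤ (1 / 2) ^ k := by
    rw [hk, ← Finset.prod_const]
    exact Finset.prod_le_prod (fun h hh => hnonneg h) hhalf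
  have hprodC : ∏ h ∈ Sᶜ, X (i + h.val) (U h) ≤ 1 :=
    Finset.prod_le_one (fun h _ => hnonneg h) (fun h _ => hle1 h)
  have hprodCnn : 0 ≤ ∏ h ∈ Sᶜ, X (i + h.val) (U h) :=
    Finset.prod_nonneg (fun h _ => hnonneg h)
  have hprodSnn : 0 ≤ ∏ h ∈ S, X (i + h.val) (U h) :=
    Finset.prod_nonneg (fun h _ => hnonneg h)
  have hbound : 1 / z ≤ (1 / 2) ^ k := by
    calc 1 / z ≤ ∏ h : Fin m, X (i + h.val) (U h) := hU
    _ = _ := hsplit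
    _ ≤ (1 / 2) ^ k * 1 := mul_le_mul hprodS hprodC hprodCnn (by positivity)
    _ = (1 / 2) ^ k := mul_one _
  have hz0 : (0 : ℝ) < z := lt_of_lt_of_le one_pos hz
  have h2k : (2 : ℝ) ^ k ≤ z := by
    have h2k0 : (0 : ℝ) < 2 ^ k := by positivity
    rw [one_div_pow, div_le_div_iff₀ hz0 h2k0, one_mul, one_mul] at hbound
    exact hbound
  have hlogb : (k : ℝ) ≤ Real.logb 2 z := by
    have := Real.logb_le_logb_of_le (b := 2) (by norm_num) (x := (2:ℝ)^k) (by positivity) h2k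
    rwa [Real.logb_pow, Real.logb_self_eq_one (by norm_num), mul_one] at this
  calc ((S.image (fun h => (h, U h))).card : ℝ) ≤ (k : ℝ) := by exact_mod_cast hcard
  _ ≤ Real.logb 2 z := hlogb
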